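/- Let ω be a nonzero real number, and let θ, γ ∈ ℝ be such that θ/ω is irrational and there exist no integers a, b with γ/ω = a·(θ/ω) + b. Then there exist infinitely many q ∈ ℤ such that min_{p ∈ ℤ} |γ − qθ + pω| < |ω|/(4|q|). -/

import Mathlib

private lemma mink_round_min (y : ℝ) (n : ℤ) : |y - round y| ≤ |y - n| := by
  rcases eq_or_ne n (round y) with h | h
  · rw [h]
  · have h1 : (1:ℝ) ≤ |(round y : ℝ) - n| := by
      have : ((round y - n : ℤ) : ℝ) ≠ 0 := by
        exact_mod_cast sub_ne_zero.mpr h.symm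
      have := Int.one_le_abs (sub_ne_zero.mpr h.symm)
      calc (1:ℝ) ≤ |((round y - n : ℤ) : ℝ)| := by exact_mod_cast this
        _ = |(round y : ℝ) - n| := by push_cast; ring_nf
    have h2 : |y - round y| ≤ 1/2 := abs_sub_round y
    have h3 : |(round y : ℝ) - n| ≤ |(round y : ℝ) - y| + |y - n| := abs_sub_le _ _ _
    have h4 : |(round y : ℝ) - y| = |y - round y| := abs_sub_comm _ _
    linarith

private lemma mink_core_pos (a b e η : ℝ) (ha : 0 < a) (hb : 0 < b) (hab : a + b = 1)
    (he : 0 < e) (he1 : e < 1) (hη0 : 0 ≤ η) (hη : η ≤ 1/2) :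
    a * |a*e - η| < 1/4 ∨ b * |b*e + η| < 1/4 := by
  by_contra h
  push_neg at h
  obtain ⟨h1, h2⟩ := h
  have hb2 : 1/4 ≤ b*(b*e+η) := by
    rwa [abs_of_pos (by positivity)] at h2
  rcases le_or_gt η (a*e) with hc | hc
  · have h1' : 1/4 ≤ a*(a*e-η) := by rwa [abs_of_nonneg (by linarith)] at h1
    have e1 : b*(1/4) ≤ b*(a*(a*e-η)) := mul_le_mul_of_nonneg_left h1' hb.le
    have e2 : a*(1/4) ≤ a*(b*(b*e+η)) := mul_le_mul_of_nonneg_left hb2 ha.le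
    have sum : b*(a*(a*e-η)) + a*(b*(b*e+η)) = a*b*e := by
      have hb' : b = 1 - a := by linarith
      rw [hb']; ring
    have hab4 : a*b ≤ 1/4 := by nlinarith [sq_nonneg (a-b)]
    have : a*b*e < a*b := by nlinarith [mul_pos ha hb]
    linarith
  · have h1' : 1/4 ≤ a*(η - a*e) := by
      rw [abs_of_neg (by linarith)] at h1; linarith
    have haη : a*η ≤ a*(1/2) := mul_le_mul_of_nonneg_left hη ha.le
    have hbη : b*η ≤ b*(1/2) := mul_le_mul_of_nonneg_left hη hb.le
    have hae : 0 < a*(a*e) := by positivity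
    have ha12 : 1/2 < a := by nlinarith
    have hba : b < a := by linarith
    have h5 : a*a*e ≤ b*b*e := by nlinarith
    have hbb : b*b < a*a := by nlinarith
    have h6 : b*b*e < a*a*e := mul_lt_mul_of_pos_right hbb he
    linarith

private lemma mink_core_abs (a b e η : ℝ) (ha : 0 < a) (hb : 0 < b) (hab : a + b = 1)
    (he : e ≠ 0) (he1 : |e| < 1) (hη : |η| ≤ 1/2) :
    a * |a*e - η| < 1/4 ∨ b * |b*e + η| < 1/4 := by
  have hη' := abs_le.mp hη
  rcases le_or_gt 0 η with h0 | h0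
  · rcases lt_or_gt_of_ne he with hneg | hpos
    · -- e < 0 : apply core to (b, a, -e, η), swap
      have := mink_core_pos b a (-e) η hb ha (by linarith) (by linarith)
        (by rw [abs_of_neg hneg] at he1; linarith) h0 hη'.2
      rcases this with h | h
      · right; have : b*(-e) - η = -(b*e + η) := by ring
        rwa [this, abs_neg] at h
      · left; have : a*(-e) + η = -(a*e - η) := by ring
        rwa [this, abs_neg] at h
    · exact mink_core_pos a b e η ha hb hab hpos (by rw [abs_of_pos hpos] at he1; exact he1) h0 hη'.2
  · -- η < 0 : apply with (b, a, e, -η), swap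
    rcases lt_or_gt_of_ne he with hneg | hpos
    · -- e < 0 and η < 0 : apply core to (a, b, -e, -η)
      have := mink_core_pos a b (-e) (-η) ha hb hab (by linarith)
        (by rw [abs_of_neg hneg] at he1; linarith) (by linarith) (by linarith)
      rcases this with h | h
      · left; have : a*(-e) - (-η) = -(a*e - η) := by ring
        rwa [this, abs_neg] at h
      · right; have : b*(-e) + (-η) = -(b*e + η) := by ring
        rwa [this, abs_neg] at h
    · -- e > 0, η < 0: apply core to (b, a, e, -η)
      have := mink_core_pos b a e (-η) hb ha (by linarith)
        hpos (by rw [abs_of_pos hpos] at he1; exact he1) (by linarith) (by linarith)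
      rcases this with h | h
      · right; have : b*e - (-η) = b*e + η := by ring
        rwa [this] at h
      · left; have : a*e + (-η) = a*e - η := by ring
        rwa [this] at h

private lemma mink_approx (ξ : ℝ) (hirr : Irrational ξ) (N : ℕ) :
    ∃ p q : ℤ, 0 < q ∧ (N:ℤ) < q ∧ IsCoprime p q ∧ (q:ℝ)*ξ - p ≠ 0 ∧
      (q:ℝ)*|(q:ℝ)*ξ - p| < 1 := by
  classical
  set D : Finset ℤ := Finset.Icc 1 (N+1) with hD
  have hne : D.Nonempty := ⟨1, by simp [hD]⟩
  set f : ℤ → ℝ := fun k => |(k:ℝ)*ξ - round ((k:ℝ)*ξ)| with hf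
  set δ : ℝ := D.inf' hne f with hδdef
  have hδ : 0 < δ := by
    rw [hδdef, Finset.lt_inf'_iff]
    intro k hk
    have hk1 : (1:ℤ) ≤ k := (Finset.mem_Icc.mp hk).1
    have hk0 : k ≠ 0 := by omega
    have hirr' : Irrational ((k:ℝ)*ξ) := by
      have := hirr.intCast_mul hk0
      simpa using this
    have : (k:ℝ)*ξ - round ((k:ℝ)*ξ) ≠ 0 :=
      sub_ne_zero.mpr (hirr'.ne_int _)
    exact abs_pos.mpr this
  obtain ⟨n₀, hn₀⟩ := exists_nat_gt (1/δ)
  set n : ℕ := n₀ + N + 1 with hn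
  have hnpos : 0 < n := by omega
  have hfrac : 1/((n:ℝ)+1) < δ := by
    have h1 : (1/δ) < (n:ℝ)+1 := by
      have hle' : n₀ ≤ n := by omega
      have : (n₀:ℝ) ≤ n := by exact_mod_cast hle'
      linarith
    rw [div_lt_iff₀ (by positivity)] at h1 ⊢
    nlinarith
  obtain ⟨j, k, hk0, hkn, hjk⟩ := Real.exists_int_int_abs_mul_sub_le ξ hnpos
  set g : ℤ := (Int.gcd j k : ℤ) with hg
  have hgpos0 : 0 < Int.gcd j k := Int.gcd_pos_of_ne_zero_right j hk0.ne'
  have hgpos : 0 < (Int.gcd j k : ℤ) := by exact_mod_cast hgpos0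
  set p : ℤ := j / g with hp
  set q : ℤ := k / g with hq
  have hjp : g * p = j := Int.mul_ediv_cancel' (Int.gcd_dvd_left _ _)
  have hkq : g * q = k := Int.mul_ediv_cancel' (Int.gcd_dvd_right _ _)
  have hqpos : 0 < q := by
    rcases mul_pos_iff.mp (hkq ▸ hk0) with ⟨-, h⟩ | ⟨h, -⟩
    · exact h
    · omega
  have hcop : IsCoprime p q := by
    rw [Int.isCoprime_iff_gcd_eq_one]
    exact Int.gcd_div_gcd_div_gcd hgpos0
  have hg1' : 1 ≤ g := hgpos
  have hg1 : (1:ℝ) ≤ (g:ℝ) := by exact_mod_cast hg1'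
  have hsplit : (k:ℝ)*ξ - j = (g:ℝ)*((q:ℝ)*ξ - p) := by
    rw [← hjp, ← hkq]; push_cast; ring
  have habs : (g:ℝ)*|(q:ℝ)*ξ - p| = |(k:ℝ)*ξ - j| := by
    have habsg : |(g:ℝ)| = (g:ℝ) := abs_of_pos (by linarith)
    rw [hsplit, abs_mul, habsg]
  have hle : |(q:ℝ)*ξ - p| ≤ |(k:ℝ)*ξ - j| := by
    rw [← habs]
    nlinarith [abs_nonneg ((q:ℝ)*ξ - p)]
  have hne0 : (q:ℝ)*ξ - p ≠ 0 := by
    have hirr' : Irrational ((q:ℝ)*ξ) := by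
      have := hirr.intCast_mul hqpos.ne'
      simpa using this
    exact sub_ne_zero.mpr (hirr'.ne_int _)
  have hsmall : |(q:ℝ)*ξ - p| < δ :=
    lt_of_le_of_lt (hle.trans hjk) hfrac
  have hqN : (N:ℤ) < q := by
    by_contra hcon
    push_neg at hcon
    have hmem : q ∈ D := Finset.mem_Icc.mpr ⟨hqpos, by omega⟩
    have h1 : δ ≤ f q := Finset.inf'_le f hmem
    have h2 : f q ≤ |(q:ℝ)*ξ - p| := mink_round_min _ _
    linarith
  have hqk : (q:ℝ) ≤ (k:ℝ) := by
    have : q ≤ k := by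
      calc q = 1*q := (one_mul q).symm
        _ ≤ g*q := by exact mul_le_mul_of_nonneg_right hg1' hqpos.le
        _ = k := hkq
    exact_mod_cast this
  have hkn' : (k:ℝ) ≤ (n:ℝ) := by exact_mod_cast hkn
  have hfinal : (q:ℝ)*|(q:ℝ)*ξ - p| < 1 := by
    have h1 : (q:ℝ)*|(q:ℝ)*ξ - p| ≤ (q:ℝ)*(1/((n:ℝ)+1)) := by
      have hq0 : (0:ℝ) ≤ q := by exact_mod_cast hqpos.le
      exact mul_le_mul_of_nonneg_left (hle.trans hjk) hq0
    have h2 : (q:ℝ)*(1/((n:ℝ)+1)) < 1 := by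
      rw [mul_one_div, div_lt_one (by positivity)]
      linarith
    linarith
  exact ⟨p, q, hqpos, hqN, hcop, hne0, hfinal⟩

set_option maxHeartbeats 2000000 in
private lemma mink_key (ξ x : ℝ) (hirr : Irrational ξ)
    (h0 : ∀ a b : ℤ, x ≠ (a:ℝ)*ξ + b) (c : ℝ) (hc : 0 < c) :
    ∃ Q P : ℤ, Q ≠ 0 ∧ |x - (Q:ℝ)*ξ + P| < 1/(4*|(Q:ℝ)|) ∧ |x - (Q:ℝ)*ξ + P| < c := by
  have hm₀ : 0 < |x - round x| := by
    have : x ≠ ((round x : ℤ) : ℝ) := by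
      have := h0 0 (round x); simpa using this
    exact abs_pos.mpr (sub_ne_zero.mpr this)
  set m₀ : ℝ := |x - round x| with hm₀def
  obtain ⟨N, hN⟩ := exists_nat_gt (1/(2*m₀) + 2/c)
  have hNm : 1/(2*m₀) < (N:ℝ) := by
    have : 0 < 2/c := by positivity
    linarith
  have hNc : 2/c < (N:ℝ) := by
    have : 0 < 1/(2*m₀) := by positivity
    linarith
  obtain ⟨p₀, q₀, hq₀pos, hq₀N, hcop, hεne, hE1⟩ := mink_approx ξ hirr N
  have hqr : (0:ℝ) < (q₀:ℝ) := by exact_mod_cast hq₀pos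
  have hqrN : (N:ℝ) < (q₀:ℝ) := by exact_mod_cast hq₀N
  set ε : ℝ := (q₀:ℝ)*ξ - p₀ with hεdef
  set E : ℝ := (q₀:ℝ)*ε with hEdef
  have hEne : E ≠ 0 := mul_ne_zero hqr.ne' hεne
  have hEabs : |E| < 1 := by
    rw [hEdef, abs_mul, abs_of_pos hqr]; exact hE1
  set s : ℤ := round ((q₀:ℝ)*x) with hsdef
  set η : ℝ := (q₀:ℝ)*x - s with hηdef
  have hη : |η| ≤ 1/2 := abs_sub_round _
  obtain ⟨u, v, huv⟩ := hcop
  set t : ℤ := (s*u) / q₀ with htdef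
  set Q₁ : ℤ := (s*u) % q₀ with hQ₁def
  have hQ₁0 : 0 ≤ Q₁ := Int.emod_nonneg _ hq₀pos.ne'
  have hQ₁lt : Q₁ < q₀ := Int.emod_lt_of_pos _ hq₀pos
  have htQ : Q₁ = s*u - q₀*t := Int.emod_def _ _
  set P₁ : ℤ := -(s*v + t*p₀) with hP₁def
  have hs1 : Q₁*p₀ - P₁*q₀ = s := by
    rw [hP₁def]
    linear_combination p₀ * htQ + s * huv
  have hQ₁ne : Q₁ ≠ 0 := by
    intro h
    rw [h, zero_mul, zero_sub] at hs1
    -- s = -P₁ * q₀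
    have hsq : ((s:ℝ)) = ((-P₁ : ℤ):ℝ) * (q₀:ℝ) := by
      push_cast
      have : -(P₁ * q₀) = s := by linarith [hs1]
      push_cast [← this]; ring
    have h1 : |(q₀:ℝ)*x - s| ≤ 1/2 := abs_sub_round _
    have h2 : (q₀:ℝ)*x - s = (q₀:ℝ)*(x - ((-P₁ : ℤ):ℝ)) := by rw [hsq]; ring
    have h3 : |x - ((-P₁ : ℤ):ℝ)| ≤ 1/(2*(q₀:ℝ)) := by
      rw [h2, abs_mul, abs_of_pos hqr] at h1
      rw [le_div_iff₀ (by positivity)]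
      linarith [h1]
    have h4 : m₀ ≤ |x - ((-P₁ : ℤ):ℝ)| := mink_round_min x _
    have h5 : 1/(2*(q₀:ℝ)) < m₀ := by
      rw [div_lt_iff₀ (by positivity)]
      rw [div_lt_iff₀ (by positivity)] at hNm
      nlinarith
    linarith
  have hcomp : ∀ Q P : ℤ, Q*p₀ - P*q₀ = s → x - (Q:ℝ)*ξ + P = (η - Q*ε)/(q₀:ℝ) := by
    intro Q P h
    have hR : (Q:ℝ)*(p₀:ℝ) - (P:ℝ)*(q₀:ℝ) = (s:ℝ) := by exact_mod_cast h
    rw [eq_div_iff hqr.ne', hηdef, hεdef]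
    linear_combination (-1:ℝ) * hR
  -- the two candidates
  set a : ℝ := (Q₁:ℝ)/(q₀:ℝ) with hadef
  have hQ₁pos : (0:ℝ) < (Q₁:ℝ) := by
    exact_mod_cast lt_of_le_of_ne hQ₁0 (Ne.symm hQ₁ne)
  have hQ₁ltr : ((Q₁:ℝ)) < (q₀:ℝ) := by exact_mod_cast hQ₁lt
  have hapos : 0 < a := by positivity
  have halt : a < 1 := (div_lt_one hqr).mpr hQ₁ltr
  set b : ℝ := 1 - a with hbdef
  have hbpos : 0 < b := by rw [hbdef]; linarith
  have finish : ∀ Q P : ℤ, Q ≠ 0 → Q*p₀ - P*q₀ = s → |(Q:ℝ)| ≤ (q₀:ℝ) →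
      |(Q:ℝ)| * |x - (Q:ℝ)*ξ + P| < 1/4 →
      ∃ Q' P' : ℤ, Q' ≠ 0 ∧ |x - (Q':ℝ)*ξ + P'| < 1/(4*|(Q':ℝ)|) ∧
        |x - (Q':ℝ)*ξ + P'| < c := by
    intro Q P hQne hs hQle hprod
    have hQr : (0:ℝ) < |(Q:ℝ)| := by
      rw [abs_pos]; exact_mod_cast hQne
    refine ⟨Q, P, hQne, ?_, ?_⟩
    · rw [lt_div_iff₀ (by positivity)]
      calc |x - (Q:ℝ)*ξ + P| * (4*|(Q:ℝ)|) = 4 * (|(Q:ℝ)| * |x - (Q:ℝ)*ξ + P|) := by ring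
        _ < 4 * (1/4) := by linarith
        _ = 1 := by norm_num
    · have hex : x - (Q:ℝ)*ξ + P = (η - Q*ε)/(q₀:ℝ) := hcomp Q P hs
      have hnum : |η - (Q:ℝ)*ε| ≤ 3/2 := by
        have h1 : |(Q:ℝ)*ε| ≤ |E| := by
          rw [abs_mul, hEdef, abs_mul, abs_of_pos hqr]
          exact mul_le_mul_of_nonneg_right hQle (abs_nonneg _)
        calc |η - (Q:ℝ)*ε| ≤ |η| + |(Q:ℝ)*ε| := abs_sub _ _
          _ ≤ 1/2 + 1 := by linarith
          _ = 3/2 := by norm_num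
      rw [hex, abs_div, abs_of_pos hqr]
      have hcq : 2/(q₀:ℝ) < c := by
        rw [div_lt_iff₀ hqr]
        rw [div_lt_iff₀ hc] at hNc
        nlinarith
      have hstep : |η - (Q:ℝ)*ε| / (q₀:ℝ) < 2/(q₀:ℝ) := by
        rw [div_lt_div_iff₀ hqr hqr]
        nlinarith
      linarith
  rcases mink_core_abs a b E η hapos hbpos (by rw [hbdef]; ring) hEne hEabs hη with hcase | hcase
  · -- Q₁ branch
    apply finish Q₁ P₁ hQ₁ne hs1 (by rw [abs_of_pos hQ₁pos]; linarith)
    have hex : x - (Q₁:ℝ)*ξ + P₁ = (η - Q₁*ε)/(q₀:ℝ) := hcomp Q₁ P₁ hs1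
    rw [hex, abs_div, abs_of_pos hqr, abs_of_pos hQ₁pos]
    have h1 : (Q₁:ℝ) * (|η - Q₁*ε| / (q₀:ℝ)) = a * |η - Q₁*ε| := by
      rw [hadef]; ring
    rw [h1]
    have h2 : (Q₁:ℝ)*ε = a*E := by
      rw [hadef, hEdef]; field_simp
    rw [h2, abs_sub_comm]
    exact hcase
  · -- Q₁ - q₀ branch
    have hs2 : (Q₁ - q₀)*p₀ - (P₁ - p₀)*q₀ = s := by linear_combination hs1
    have hQ2ne : Q₁ - q₀ ≠ 0 := by omega
    apply finish (Q₁ - q₀) (P₁ - p₀) hQ2ne hs2 ?_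
    · have hex : x - ((Q₁ - q₀:ℤ):ℝ)*ξ + ((P₁ - p₀:ℤ):ℝ) = (η - ((Q₁ - q₀:ℤ):ℝ)*ε)/(q₀:ℝ) :=
        hcomp _ _ hs2
      rw [hex, abs_div, abs_of_pos hqr]
      have habsQ : |((Q₁ - q₀:ℤ):ℝ)| = b * (q₀:ℝ) := by
        push_cast
        rw [abs_of_neg (by linarith), hbdef, hadef]
        field_simp
        ring
      rw [habsQ]
      have h1 : b * (q₀:ℝ) * (|η - ((Q₁ - q₀:ℤ):ℝ)*ε| / (q₀:ℝ)) = b * |η - ((Q₁ - q₀:ℤ):ℝ)*ε| := by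
        field_simp
      rw [h1]
      have h2 : η - ((Q₁ - q₀:ℤ):ℝ)*ε = b*E + η := by
        push_cast
        rw [hbdef, hadef, hEdef]
        field_simp
        ring
      rw [h2]
      exact hcase
    · push_cast
      rw [abs_of_neg (by linarith)]
      linarith


private lemma mink_main (ξ x : ℝ) (hirr : Irrational ξ)
    (h0 : ∀ a b : ℤ, x ≠ (a:ℝ)*ξ + b) :
    {q : ℤ | ∃ p : ℤ, |x - (q:ℝ)*ξ + (p:ℝ)| < 1/(4*|(q:ℝ)|)}.Infinite := by
  classical
  by_contra hfin
  rw [Set.not_infinite] at hfin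
  set g : ℤ → ℝ := fun q => |(x - (q:ℝ)*ξ) - round (x - (q:ℝ)*ξ)| with hg
  set G : Finset ℤ := insert (0:ℤ) hfin.toFinset with hG
  have hGne : G.Nonempty := ⟨0, Finset.mem_insert_self _ _⟩
  set c : ℝ := G.inf' hGne g with hc
  have hcpos : 0 < c := by
    rw [hc, Finset.lt_inf'_iff]
    intro q hq
    have : x - (q:ℝ)*ξ ≠ ((round (x - (q:ℝ)*ξ) : ℤ) : ℝ) := by
      intro h
      exact h0 q (round (x - (q:ℝ)*ξ)) (by linarith [h])
    exact abs_pos.mpr (sub_ne_zero.mpr this)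
  obtain ⟨Q, P, hQne, h14, hsmall⟩ := mink_key ξ x hirr h0 c hcpos
  have hmemS : Q ∈ hfin.toFinset := by
    rw [Set.Finite.mem_toFinset]
    exact ⟨P, h14⟩
  have h1 : c ≤ g Q := Finset.inf'_le g (Finset.mem_insert_of_mem hmemS)
  have h2 : g Q ≤ |x - (Q:ℝ)*ξ + P| := by
    have := mink_round_min (x - (Q:ℝ)*ξ) (-P)
    have hx : x - (Q:ℝ)*ξ - ((-P : ℤ):ℝ) = x - (Q:ℝ)*ξ + P := by push_cast; ring
    rw [hx] at this
    exact this
  linarith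


/-- (Minkowski-type theorem, rescaled by `ω`.) Let `ω ≠ 0`, and let
`θ, γ ∈ ℝ` with `θ/ω` irrational and such that `γ/ω = a (θ/ω) + b` has no integer
solutions `a, b`. Then there are infinitely many `q ∈ ℤ` such that
`min_{p ∈ ℤ} |γ - q θ + p ω| < |ω| / (4 |q|)`. -/
theorem minkowski_inhomogeneous_rescaled
    (ω θ γ : ℝ) (hω : ω ≠ 0) (hirr : Irrational (θ / ω))
    (hno : ¬ ∃ a b : ℤ, γ / ω = (a : ℝ) * (θ / ω) + (b : ℝ)) :
    {q : ℤ | ∃ p : ℤ,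
      |γ - (q : ℝ) * θ + (p : ℝ) * ω| < |ω| / (4 * |(q : ℝ)|)}.Infinite := by
  push_neg at hno
  have hωabs : 0 < |ω| := abs_pos.mpr hω
  have hsub : {q : ℤ | ∃ p : ℤ, |γ/ω - (q:ℝ)*(θ/ω) + (p:ℝ)| < 1/(4*|(q:ℝ)|)} ⊆
      {q : ℤ | ∃ p : ℤ, |γ - (q : ℝ) * θ + (p : ℝ) * ω| < |ω| / (4 * |(q : ℝ)|)} := by
    rintro q ⟨p, hp⟩
    refine ⟨p, ?_⟩
    have hexp : γ - (q:ℝ)*θ + (p:ℝ)*ω = ω*(γ/ω - (q:ℝ)*(θ/ω) + (p:ℝ)) := by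
      field_simp
    have hrhs : |ω| / (4 * |(q:ℝ)|) = |ω| * (1/(4*|(q:ℝ)|)) := by ring
    rw [hexp, abs_mul, hrhs]
    exact mul_lt_mul_of_pos_left hp hωabs
  exact (mink_main (θ/ω) (γ/ω) hirr hno).mono hsub
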